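/- Let p : [-1,1] → ℝ be continuous, even and strictly positive, define L f(v) = (1/2)∫_{-1}^{1} p(v) p(w) (f(w) − f(v)) dw, and set α = ∫_0^1 p(v) dv. Let h ∈ L²([-1,1]) satisfy ⟨h⟩_V = 0. Then the function u := (1/α)( ⟨h/p⟩_V·1 − h/p ) satisfies ⟨u⟩_V = 0 and L u = h almost everywhere; moreover u is the unique element of L²([-1,1]) with these two properties. (In other words, u = L^{-1} h, where L^{-1} denotes the pseudo-inverse of L on the range {h : ⟨h⟩_V = 0}.) -/

import Mathlib

open MeasureTheory Set

/-- explicit pseudo-inverse of the product-kernel collision operator.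
If `⟨h⟩_V = 0` then `u = (1/α)(⟨h/p⟩_V·1 − h/p)` is the unique mean-zero `L²`
solution of `L u = h` (a.e.), where `α = ∫_0^1 p`. -/
theorem stmt_4
    (p : ℝ → ℝ)
    (hp_cont : ContinuousOn p (Icc (-1:ℝ) 1))
    (hp_even : ∀ v ∈ Icc (-1:ℝ) 1, p (-v) = p v)
    (hp_pos : ∀ v ∈ Icc (-1:ℝ) 1, 0 < p v)
    (α : ℝ) (hα : α = ∫ v in (0:ℝ)..1, p v)
    (h : ℝ → ℝ)
    (hh : MemLp h 2 (volume.restrict (Icc (-1:ℝ) 1)))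
    (hmean : (1/2) * (∫ v in (-1:ℝ)..1, h v) = 0)
    (u : ℝ → ℝ)
    (hu : ∀ v, u v = (1/α) * ((1/2) * (∫ w in (-1:ℝ)..1, h w / p w) - h v / p v)) :
    -- u has zero mean
    ((1/2) * ∫ v in (-1:ℝ)..1, u v) = 0 ∧
    -- L u = h almost everywhere
    (∀ᵐ v ∂(volume.restrict (Icc (-1:ℝ) 1)),
        (1/2) * (∫ w in (-1:ℝ)..1, p v * p w * (u w - u v)) = h v) ∧
    -- uniqueness in L² among mean-zero solutions
    (∀ u' : ℝ → ℝ, MemLp u' 2 (volume.restrict (Icc (-1:ℝ) 1)) →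
      ((1/2) * ∫ v in (-1:ℝ)..1, u' v) = 0 →
      (∀ᵐ v ∂(volume.restrict (Icc (-1:ℝ) 1)),
          (1/2) * (∫ w in (-1:ℝ)..1, p v * p w * (u' w - u' v)) = h v) →
      u' =ᵐ[volume.restrict (Icc (-1:ℝ) 1)] u) := by
  have hI : MeasurableSet (Icc (-1:ℝ) 1) := measurableSet_Icc
  have huIcc : uIcc (-1:ℝ) 1 = Icc (-1:ℝ) 1 := uIcc_of_le (by norm_num)
  have huIcc01 : uIcc (0:ℝ) 1 = Icc (0:ℝ) 1 := uIcc_of_le (by norm_num)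
  -- minimum of p on Icc
  obtain ⟨x₀, hx₀, hmin⟩ := isCompact_Icc.exists_isMinOn (⟨0, by norm_num⟩ :
    (Icc (-1:ℝ) 1).Nonempty) hp_cont
  set m := p x₀ with hm_def
  have hm_pos : 0 < m := hp_pos x₀ hx₀
  have hm : ∀ v ∈ Icc (-1:ℝ) 1, m ≤ p v := fun v hv => isMinOn_iff.mp hmin v hv
  -- bound of p on Icc
  obtain ⟨M, hM⟩ := isCompact_Icc.exists_bound_of_continuousOn hp_cont
  -- integrability of p
  have hint_p : IntegrableOn p (Icc (-1:ℝ) 1) := hp_cont.integrableOn_compact isCompact_Icc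
  have hip : IntervalIntegrable p volume (-1) 1 := by
    apply IntegrableOn.intervalIntegrable; rwa [huIcc]
  have hip01 : IntervalIntegrable p volume 0 1 := by
    apply IntegrableOn.intervalIntegrable
    rw [huIcc01]; exact hint_p.mono_set (Icc_subset_Icc (by norm_num) le_rfl)
  -- α is positive
  have hα_pos : 0 < α := by
    rw [hα]
    apply intervalIntegral.intervalIntegral_pos_of_pos_on hip01
    · exact fun x hx => hp_pos x ⟨by linarith [hx.1], le_of_lt hx.2⟩
    · norm_num
  have hα_ne : α ≠ 0 := ne_of_gt hα_pos
  -- ∫_{-1}^1 p = 2α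
  have h2α : (∫ v in (-1:ℝ)..1, p v) = 2 * α := by
    have hsplit : (∫ v in (-1:ℝ)..0, p v) + (∫ v in (0:ℝ)..1, p v)
        = ∫ v in (-1:ℝ)..1, p v :=
      intervalIntegral.integral_add_adjacent_intervals
        (by apply IntegrableOn.intervalIntegrable
            rw [uIcc_of_le (by norm_num : (-1:ℝ) ≤ 0)]
            exact hint_p.mono_set (Icc_subset_Icc le_rfl (by norm_num))) hip01
    have hneg : (∫ v in (-1:ℝ)..0, p v) = ∫ v in (0:ℝ)..1, p v := by
      have h1 : (∫ v in (0:ℝ)..1, p (-v)) = ∫ v in (-1:ℝ)..0, p v := by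
        simpa using intervalIntegral.integral_comp_neg (a := (0:ℝ)) (b := 1) p
      rw [← h1]
      apply intervalIntegral.integral_congr
      intro x hx
      rw [huIcc01] at hx
      exact hp_even x ⟨by linarith [hx.1], hx.2⟩
    rw [← hsplit, hneg, ← hα]; ring
  -- integrability of h
  have hh_int : IntegrableOn h (Icc (-1:ℝ) 1) := hh.integrable one_le_two
  have hih : IntervalIntegrable h volume (-1) 1 := by
    apply IntegrableOn.intervalIntegrable; rwa [huIcc]
  have hint_h0 : (∫ v in (-1:ℝ)..1, h v) = 0 := by linarith
  -- integrability of h / p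
  have hp_meas : AEStronglyMeasurable p (volume.restrict (Icc (-1:ℝ) 1)) :=
    hp_cont.aestronglyMeasurable hI
  have hhp_int : IntegrableOn (fun v => h v / p v) (Icc (-1:ℝ) 1) := by
    apply Integrable.mono' ((hh_int.norm).const_mul m⁻¹) ((hh.1.aemeasurable.div hp_meas.aemeasurable).aestronglyMeasurable)
    filter_upwards [ae_restrict_mem hI] with v hv
    have hpv : 0 < p v := hp_pos v hv
    have : ‖h v / p v‖ = ‖h v‖ / p v := by
      rw [norm_div, Real.norm_eq_abs (p v), abs_of_pos hpv]
    rw [Pi.div_apply, this]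
    rw [div_le_iff₀ hpv, inv_mul_eq_div, div_mul_eq_mul_div, le_div_iff₀ hm_pos]
    exact mul_le_mul_of_nonneg_left (hm v hv) (norm_nonneg _)
  have hihp : IntervalIntegrable (fun v => h v / p v) volume (-1) 1 := by
    apply IntegrableOn.intervalIntegrable; rwa [huIcc]
  set c : ℝ := (1/2) * (∫ w in (-1:ℝ)..1, h w / p w) with hc_def
  -- integrability of u
  have hu_eq : u = fun v => (1/α) * (c - h v / p v) := funext hu
  have hu_int : IntegrableOn u (Icc (-1:ℝ) 1) := by
    rw [hu_eq]
    exact (((integrable_const c).sub hhp_int).const_mul _)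
  have hiu : IntervalIntegrable u volume (-1) 1 := by
    apply IntegrableOn.intervalIntegrable; rwa [huIcc]
  -- mean of u is zero
  have humean : (∫ v in (-1:ℝ)..1, u v) = 0 := by
    rw [hu_eq]
    rw [intervalIntegral.integral_const_mul]
    rw [intervalIntegral.integral_sub intervalIntegrable_const hihp]
    rw [intervalIntegral.integral_const]
    simp only [smul_eq_mul]
    rw [hc_def]
    ring
  -- ∫ p u = 2c
  have hpu_int : IntegrableOn (fun w => p w * u w) (Icc (-1:ℝ) 1) := by
    have : EqOn (fun w => p w * u w) (fun w => (1/α) * (c * p w - h w)) (Icc (-1:ℝ) 1) := by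
      intro w hw
      have hpw : p w ≠ 0 := ne_of_gt (hp_pos w hw)
      simp only [hu w, ← hc_def]
      field_simp
    exact IntegrableOn.congr_fun
      ((((hint_p.const_mul c).sub hh_int).const_mul _)) this.symm hI
  have hipu : IntervalIntegrable (fun w => p w * u w) volume (-1) 1 := by
    apply IntegrableOn.intervalIntegrable; rwa [huIcc]
  have hpu : (∫ w in (-1:ℝ)..1, p w * u w) = 2 * c := by
    have heq : (∫ w in (-1:ℝ)..1, p w * u w)
        = ∫ w in (-1:ℝ)..1, (1/α) * (c * p w - h w) := by
      apply intervalIntegral.integral_congr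
      intro w hw
      rw [huIcc] at hw
      have hpw : p w ≠ 0 := ne_of_gt (hp_pos w hw)
      simp only [hu w, ← hc_def]
      field_simp
    rw [heq, intervalIntegral.integral_const_mul,
      intervalIntegral.integral_sub (hip.const_mul c) hih,
      intervalIntegral.integral_const_mul, h2α, hint_h0]
    field_simp
    ring
  refine ⟨by rw [humean]; ring, ?_, ?_⟩
  · -- L u = h pointwise on Icc
    filter_upwards [ae_restrict_mem hI] with v hv
    have hpv : 0 < p v := hp_pos v hv
    have hsplit : (∫ w in (-1:ℝ)..1, p v * p w * (u w - u v))
        = p v * (∫ w in (-1:ℝ)..1, p w * u w) - (p v * u v) * (∫ w in (-1:ℝ)..1, p w) := by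
      have : (fun w => p v * p w * (u w - u v))
          = fun w => p v * (p w * u w) - (p v * u v) * p w := by
        funext w; ring
      rw [this, intervalIntegral.integral_sub (hipu.const_mul _) (hip.const_mul _),
        intervalIntegral.integral_const_mul, intervalIntegral.integral_const_mul]
    rw [hsplit, hpu, h2α]
    have huv : u v = (1/α) * (c - h v / p v) := hu v
    rw [huv]
    field_simp
    ring
  · -- uniqueness
    intro u' hu'2 hu'mean hu'L
    have hu'_int : IntegrableOn u' (Icc (-1:ℝ) 1) := hu'2.integrable one_le_two
    have hiu' : IntervalIntegrable u' volume (-1) 1 := by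
      apply IntegrableOn.intervalIntegrable; rwa [huIcc]
    have hpu'_int : IntegrableOn (fun w => p w * u' w) (Icc (-1:ℝ) 1) := by
      apply Integrable.bdd_mul hu'_int hp_meas
      filter_upwards [ae_restrict_mem hI] with v hv
      exact hM v hv
    have hipu' : IntervalIntegrable (fun w => p w * u' w) volume (-1) 1 := by
      apply IntegrableOn.intervalIntegrable; rwa [huIcc]
    set c' : ℝ := (1/2) * (∫ w in (-1:ℝ)..1, p w * u' w) with hc'_def
    -- a.e. formula for u'
    have key : ∀ᵐ v ∂(volume.restrict (Icc (-1:ℝ) 1)), u' v - u v = (c' - c) / α := by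
      filter_upwards [ae_restrict_mem hI, hu'L] with v hv hLv
      have hpv : 0 < p v := hp_pos v hv
      have hsplit : (∫ w in (-1:ℝ)..1, p v * p w * (u' w - u' v))
          = p v * (∫ w in (-1:ℝ)..1, p w * u' w) - (p v * u' v) * (∫ w in (-1:ℝ)..1, p w) := by
        have : (fun w => p v * p w * (u' w - u' v))
            = fun w => p v * (p w * u' w) - (p v * u' v) * p w := by
          funext w; ring
        rw [this, intervalIntegral.integral_sub (hipu'.const_mul _) (hip.const_mul _),
          intervalIntegral.integral_const_mul, intervalIntegral.integral_const_mul]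
      rw [hsplit, h2α] at hLv
      -- hLv : (1/2) * (p v * (∫ p u') - (p v * u' v) * (2α)) = h v
      have hu'v : u' v = (c' - h v / p v) / α := by
        have hpvne : p v ≠ 0 := ne_of_gt hpv
        rw [hc'_def]
        field_simp
        nlinarith [hLv]
      have huv : u v = (c - h v / p v) / α := by
        rw [hu v]; field_simp
      rw [hu'v, huv]
      field_simp
      ring
    -- integrate the constant difference
    have hdiff_int : (∫ v in (-1:ℝ)..1, (u' v - u v)) = 2 * ((c' - c) / α) := by
      rw [intervalIntegral.integral_of_le (by norm_num : (-1:ℝ) ≤ 1)]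
      have key' : ∀ᵐ v ∂(volume.restrict (Ioc (-1:ℝ) 1)), u' v - u v = (c' - c) / α :=
        ae_restrict_of_ae_restrict_of_subset Ioc_subset_Icc_self key
      calc (∫ x in Ioc (-1:ℝ) 1, (u' x - u x))
          = ∫ _x in Ioc (-1:ℝ) 1, ((c' - c) / α) := integral_congr_ae key'
        _ = 2 * ((c' - c) / α) := by
            rw [setIntegral_const, Real.volume_real_Ioc, smul_eq_mul]
            norm_num
    have hdiff0 : (∫ v in (-1:ℝ)..1, (u' v - u v)) = 0 := by
      rw [intervalIntegral.integral_sub hiu' hiu, humean]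
      have : (∫ v in (-1:ℝ)..1, u' v) = 0 := by linarith
      rw [this]; ring
    have hcc : c' = c := by
      rw [hdiff0] at hdiff_int
      have : c' - c = 0 := by
        field_simp at hdiff_int
        linarith
      linarith
    filter_upwards [key] with v hv
    rw [hcc] at hv
    have : u' v - u v = 0 := by rw [hv]; simp
    linarith
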